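/- Let ŵ ∈ ℝ^{kd}, γ > 0 and τ > 0 with 2τ < γ. Suppose (x,y) ∈ ℝ^d × {1,…,k} is misclassified by ŵ, i.e., there exists y' ≠ y with ⟨ŵ_{y'}, x⟩ > ⟨ŵ_y, x⟩. Then every point (x_i, y) of the pancake P_ŵ^τ(x,y) satisfies ⟨ŵ, Ψ(x_i,y) − Ψ(x_i,y')⟩ ≤ 2τ < γ; consequently ℓ_γ(ŵ;(x_i,y)) > 0 and every label ŷ_i attaining the maximum in the definition of ℓ_γ(ŵ;(x_i,y)) satisfies ŷ_i ≠ y. -/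

import Mathlib

open scoped BigOperators RealInnerProductSpace
open Finset

/-- The class-sensitive feature map `Ψ : ℝ^d × {1,…,k} → ℝ^{kd}`: the `y`-th block of
`d` coordinates of `Psi d k x y` equals `x`, the remaining coordinates are zero. -/
noncomputable def Psi (d k : ℕ) (x : EuclideanSpace ℝ (Fin d)) (y : Fin k) :
    EuclideanSpace ℝ (Fin k × Fin d) :=
  WithLp.toLp 2 (fun p : Fin k × Fin d => if p.1 = y then x p.2 else 0)

/-- The `y`-th block `w_y ∈ ℝ^d` of a vector `w ∈ ℝ^{kd}`. -/
noncomputable def block (d k : ℕ) (w : EuclideanSpace ℝ (Fin k × Fin d)) (y : Fin k) :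
    EuclideanSpace ℝ (Fin d) :=
  WithLp.toLp 2 (fun j : Fin d => w (y, j))

/-- The multiclass pancake `P_w^τ(x,y)`: pairs `(x',y')` with `y' = y` and
`|⟨w_ȳ, x' − x⟩| ≤ τ` for every label `ȳ`. -/
def pancake (d k : ℕ) (w : EuclideanSpace ℝ (Fin k × Fin d)) (τ : ℝ)
    (x : EuclideanSpace ℝ (Fin d)) (y : Fin k) :
    Set (EuclideanSpace ℝ (Fin d) × Fin k) :=
  {p | p.2 = y ∧ ∀ ybar : Fin k, |⟪block d k w ybar, p.1 - x⟫| ≤ τ}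

/-- The γ-scaled multiclass hinge loss
`ℓ_γ(w;(x,y)) = max_{y'} (1[y' ≠ y] − (1/γ)·⟨w, Ψ(x,y) − Ψ(x,y')⟩)`. -/
noncomputable def hinge (d k : ℕ) [NeZero k] (γ : ℝ)
    (w : EuclideanSpace ℝ (Fin k × Fin d)) (x : EuclideanSpace ℝ (Fin d)) (y : Fin k) : ℝ :=
  Finset.univ.sup' Finset.univ_nonempty
    (fun y' : Fin k => (if y' ≠ y then (1:ℝ) else 0) - (1/γ) * ⟪w, Psi d k x y - Psi d k x y'⟫)

lemma inner_Psi (d k : ℕ) (w : EuclideanSpace ℝ (Fin k × Fin d))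
    (x : EuclideanSpace ℝ (Fin d)) (y : Fin k) :
    ⟪w, Psi d k x y⟫ = ⟪block d k w y, x⟫ := by
  simp only [PiLp.inner_apply, RCLike.inner_apply, conj_trivial, Psi, block]
  rw [Fintype.sum_prod_type]
  rw [Finset.sum_eq_single y]
  · simp
  · intro b _ hb
    simp [if_neg hb]
  · simp

/-- if `(x,y)` is misclassified by `what` via label `y' ≠ y`, and `2τ < γ`, then
every point `(xi, y)` of the pancake `P_what^τ(x,y)` satisfies
`⟨what, Ψ(xi,y) − Ψ(xi,y')⟩ ≤ 2τ < γ`; consequently `ℓ_γ(what;(xi,y)) > 0` and every label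
`yhat` attaining the maximum in the definition of `ℓ_γ(what;(xi,y))` satisfies `yhat ≠ y`. -/
theorem stmt_4 (d k : ℕ) [NeZero k] (γ τ : ℝ) (hγ : 0 < γ) (hτ : 0 < τ) (hτγ : 2 * τ < γ)
    (what : EuclideanSpace ℝ (Fin k × Fin d)) (x : EuclideanSpace ℝ (Fin d)) (y y' : Fin k)
    (hy' : y' ≠ y) (hmis : ⟪block d k what y, x⟫ < ⟪block d k what y', x⟫) :
    ∀ xi : EuclideanSpace ℝ (Fin d), (xi, y) ∈ pancake d k what τ x y →
      (⟪what, Psi d k xi y - Psi d k xi y'⟫ ≤ 2 * τ ∧ 2 * τ < γ ∧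
       0 < hinge d k γ what xi y ∧
       ∀ yhat : Fin k,
         hinge d k γ what xi y
           = (if yhat ≠ y then (1:ℝ) else 0) - (1/γ) * ⟪what, Psi d k xi y - Psi d k xi yhat⟫ →
         yhat ≠ y) := by
  intro xi hxi
  obtain ⟨-, hτ'⟩ := hxi
  have key : ∀ z : Fin k, ⟪what, Psi d k xi y - Psi d k xi z⟫
      = ⟪block d k what y, xi⟫ - ⟪block d k what z, xi⟫ := by
    intro z
    rw [inner_sub_right, inner_Psi, inner_Psi]
  have hdiff : ∀ z : Fin k, ⟪block d k what z, xi⟫ - ⟪block d k what z, x⟫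
      = ⟪block d k what z, xi - x⟫ := by
    intro z; rw [inner_sub_right]
  have hbound : ⟪what, Psi d k xi y - Psi d k xi y'⟫ ≤ 2 * τ := by
    rw [key]
    have h1 := abs_le.mp (hτ' y)
    have h2 := abs_le.mp (hτ' y')
    have e1 := hdiff y
    have e2 := hdiff y'
    nlinarith [h1.1, h1.2, h2.1, h2.2]
  have hterm : (0:ℝ) < (if y' ≠ y then (1:ℝ) else 0)
      - (1/γ) * ⟪what, Psi d k xi y - Psi d k xi y'⟫ := by
    rw [if_pos hy']
    have : (1/γ) * ⟪what, Psi d k xi y - Psi d k xi y'⟫ ≤ (1/γ) * (2*τ) := by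
      apply mul_le_mul_of_nonneg_left hbound (by positivity)
    have h2 : (1/γ) * (2*τ) < 1 := by
      rw [div_mul_eq_mul_div, one_mul, div_lt_one hγ]; exact hτγ
    linarith
  have hsup : (if y' ≠ y then (1:ℝ) else 0)
      - (1/γ) * ⟪what, Psi d k xi y - Psi d k xi y'⟫ ≤ hinge d k γ what xi y := by
    unfold hinge
    exact Finset.le_sup' (fun z : Fin k => (if z ≠ y then (1:ℝ) else 0) - (1/γ) * ⟪what, Psi d k xi y - Psi d k xi z⟫) (Finset.mem_univ y')
  refine ⟨hbound, hτγ, lt_of_lt_of_le hterm hsup, ?_⟩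
  intro yhat heq hyy
  subst hyy
  rw [if_neg (by simp), sub_self, inner_zero_right] at heq
  simp at heq
  linarith [lt_of_lt_of_le hterm hsup]
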